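/- Let R be a π-adically complete discrete valuation ring and let S* be the set of twisted power series ∑_{i≥0} B_i τ^i with matrix coefficients B_i ∈ Mat_d(R) such that v(B_i) ≥ i for all i and B_0 is invertible, where v(B) is the minimal π-adic valuation exponent such that all entries of B lie in p^{v(B)}, and multiplication is determined by B τ^i ∘ C τ^j = B C^{(q^i)} τ^{i+j} (with C^{(q^i)} denoting entrywise q^i-th power). Then S* is a group under composition. -/

import Mathlib

open Finset

/-- Composition ("twisted multiplication") of twisted power series
`∑ Bᵢ τ^i` with coefficients in `Matrix (Fin d) (Fin d) R`, determined by
`B τ^i ∘ C τ^j = B * C^{(q^i)} * τ^{i+j}` where `C^{(q^i)}` is the entrywise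
`q^i`-th power. -/
noncomputable def twistedMul {R : Type*} [CommRing R] (d q : ℕ)
    (g₁ g₂ : ℕ → Matrix (Fin d) (Fin d) R) : ℕ → Matrix (Fin d) (Fin d) R :=
  fun k => ∑ i ∈ range (k + 1), g₁ i * (g₂ (k - i)).map (fun x => x ^ q ^ i)

/-- The identity twisted power series `1 · τ^0`. -/
noncomputable def twistedOne {R : Type*} [CommRing R] (d : ℕ) :
    ℕ → Matrix (Fin d) (Fin d) R :=
  fun k => if k = 0 then 1 else 0

/-- The set `S* = {∑ Bᵢ τ^i : v(Bᵢ) ≥ i, B₀ ∈ GL_d(R)}`, where `v(B) ≥ i`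
means that every entry of `B` lies in `(π)^i`. -/
def Sstar {R : Type*} [CommRing R] (d : ℕ) (π : R) :
    Set (ℕ → Matrix (Fin d) (Fin d) R) :=
  {g | (∀ i, ∀ a b, g i a b ∈ (Ideal.span {π} : Ideal R) ^ i) ∧ IsUnit (g 0)}

section Aux

variable {R : Type*} [CommRing R] (p h : ℕ) [Fact p.Prime] [CharP R p]

lemma powq_eq (i : ℕ) : (fun x : R => x ^ (p ^ h) ^ i) = ⇑(iterateFrobenius R p (h * i)) := by
  funext x
  rw [iterateFrobenius_def, ← pow_mul]

lemma powq_map_mul {d : ℕ} (A B : Matrix (Fin d) (Fin d) R) (i : ℕ) :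
    (A * B).map (fun x => x ^ (p ^ h) ^ i)
      = A.map (fun x => x ^ (p ^ h) ^ i) * B.map (fun x => x ^ (p ^ h) ^ i) := by
  rw [powq_eq]; exact Matrix.map_mul

lemma powq_map_one {d : ℕ} (i : ℕ) :
    (1 : Matrix (Fin d) (Fin d) R).map (fun x => x ^ (p ^ h) ^ i) = 1 := by
  rw [powq_eq]
  exact Matrix.map_one _ (map_zero _) (map_one _)

lemma powq_map_zero' {d : ℕ} (i : ℕ) :
    (0 : Matrix (Fin d) (Fin d) R).map (fun x => x ^ (p ^ h) ^ i) = 0 := by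
  rw [powq_eq]
  exact Matrix.map_zero _ (map_zero _)

lemma powq_map_id {d : ℕ} (A : Matrix (Fin d) (Fin d) R) :
    A.map (fun x => x ^ (p ^ h) ^ 0) = A := by
  simp

lemma powq_map_map {d : ℕ} (A : Matrix (Fin d) (Fin d) R) (i l : ℕ) :
    (A.map (fun x => x ^ (p ^ h) ^ l)).map (fun x => x ^ (p ^ h) ^ i)
      = A.map (fun x => x ^ (p ^ h) ^ (i + l)) := by
  rw [powq_eq, powq_eq, powq_eq, Matrix.map_map, Nat.mul_add,
    iterateFrobenius_add, RingHom.coe_comp]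

lemma powq_map_sum {d : ℕ} {s : Finset ℕ} (A : ℕ → Matrix (Fin d) (Fin d) R) (i : ℕ) :
    (∑ l ∈ s, A l).map (fun x => x ^ (p ^ h) ^ i)
      = ∑ l ∈ s, (A l).map (fun x => x ^ (p ^ h) ^ i) := by
  rw [powq_eq]
  simp only [← RingHom.mapMatrix_apply, map_sum]

/-- Reindexing a triangular double sum. -/
lemma sum_triangle {M : Type*} [AddCommMonoid M] (k : ℕ) (f : ℕ → ℕ → M) :
    ∑ j ∈ range (k + 1), ∑ i ∈ range (j + 1), f i j
      = ∑ i ∈ range (k + 1), ∑ l ∈ range (k - i + 1), f i (i + l) := by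
  rw [Finset.sum_sigma', Finset.sum_sigma']
  refine Finset.sum_nbij' (fun x => ⟨x.2, x.1 - x.2⟩) (fun x => ⟨x.1 + x.2, x.1⟩)
    ?_ ?_ ?_ ?_ ?_
  · rintro ⟨j, i⟩ hm
    simp only [mem_sigma, mem_range] at hm ⊢
    constructor <;> omega
  · rintro ⟨i, l⟩ hm
    simp only [mem_sigma, mem_range] at hm ⊢
    constructor <;> omega
  · rintro ⟨j, i⟩ hm
    simp only [mem_sigma, mem_range] at hm
    simp only [Sigma.mk.inj_iff, heq_eq_eq, and_true]
    omega
  · rintro ⟨i, l⟩ hm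
    simp only [mem_sigma, mem_range] at hm
    simp only [Sigma.mk.inj_iff, heq_eq_eq, true_and, and_true]
    omega
  · rintro ⟨j, i⟩ hm
    simp only [mem_sigma, mem_range] at hm
    have : i + (j - i) = j := by omega
    simp [this]

lemma twistedMul_assoc {d : ℕ} (g₁ g₂ g₃ : ℕ → Matrix (Fin d) (Fin d) R) :
    twistedMul d (p ^ h) (twistedMul d (p ^ h) g₁ g₂) g₃
      = twistedMul d (p ^ h) g₁ (twistedMul d (p ^ h) g₂ g₃) := by
  funext k
  simp only [twistedMul]
  calc
    ∑ j ∈ range (k + 1),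
        (∑ i ∈ range (j + 1), g₁ i * (g₂ (j - i)).map (fun x => x ^ (p ^ h) ^ i)) *
          (g₃ (k - j)).map (fun x => x ^ (p ^ h) ^ j)
      = ∑ j ∈ range (k + 1), ∑ i ∈ range (j + 1),
          g₁ i * (g₂ (j - i)).map (fun x => x ^ (p ^ h) ^ i) *
            (g₃ (k - j)).map (fun x => x ^ (p ^ h) ^ j) := by
        simp only [Finset.sum_mul]
    _ = ∑ i ∈ range (k + 1), ∑ l ∈ range (k - i + 1),
          g₁ i * (g₂ (i + l - i)).map (fun x => x ^ (p ^ h) ^ i) *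
            (g₃ (k - (i + l))).map (fun x => x ^ (p ^ h) ^ (i + l)) :=
        sum_triangle k _
    _ = ∑ i ∈ range (k + 1),
          g₁ i * ((∑ l ∈ range (k - i + 1),
            g₂ l * (g₃ (k - i - l)).map (fun x => x ^ (p ^ h) ^ l)).map
              (fun x => x ^ (p ^ h) ^ i)) := by
        refine Finset.sum_congr rfl fun i hi => ?_
        rw [powq_map_sum, Finset.mul_sum]
        refine Finset.sum_congr rfl fun l hl => ?_
        rw [powq_map_mul, powq_map_map, Nat.add_sub_cancel_left, Nat.sub_sub, mul_assoc]

lemma twistedMul_one_left {d : ℕ} (g : ℕ → Matrix (Fin d) (Fin d) R) :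
    twistedMul d (p ^ h) (twistedOne d) g = g := by
  funext k
  simp only [twistedMul, twistedOne]
  rw [Finset.sum_eq_single 0]
  · simp
  · intro i _ hi
    simp [hi]
  · simp

lemma twistedMul_one_right {d : ℕ} (g : ℕ → Matrix (Fin d) (Fin d) R) :
    twistedMul d (p ^ h) g (twistedOne d) = g := by
  funext k
  simp only [twistedMul, twistedOne]
  rw [Finset.sum_eq_single k]
  · simp [powq_map_one p h]
  · intro i hi hik
    have : k - i ≠ 0 := by simp only [mem_range] at hi; omega
    simp [this, powq_map_zero' p h]
  · simp

/-- Recursively-defined right inverse: `v` is the inverse of `g 0`. -/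
noncomputable def invAux {R : Type*} [CommRing R] (d q : ℕ)
    (g : ℕ → Matrix (Fin d) (Fin d) R) (v : Matrix (Fin d) (Fin d) R) :
    ℕ → Matrix (Fin d) (Fin d) R
  | 0 => v
  | (k + 1) => -(v * ∑ i ∈ (range (k + 1)).attach,
      g (k + 1 - i.1) * (invAux d q g v i.1).map (fun x => x ^ q ^ (k + 1 - i.1)))
decreasing_by exact Finset.mem_range.mp i.2

lemma invAux_zero {R : Type*} [CommRing R] (d q : ℕ)
    (g : ℕ → Matrix (Fin d) (Fin d) R) (v : Matrix (Fin d) (Fin d) R) :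
    invAux d q g v 0 = v := by
  rw [invAux]

lemma invAux_succ {R : Type*} [CommRing R] (d q : ℕ)
    (g : ℕ → Matrix (Fin d) (Fin d) R) (v : Matrix (Fin d) (Fin d) R) (k : ℕ) :
    invAux d q g v (k + 1) = -(v * ∑ i ∈ range (k + 1),
      g (k + 1 - i) * (invAux d q g v i).map (fun x => x ^ q ^ (k + 1 - i))) := by
  rw [invAux, Finset.sum_attach (range (k + 1))
    (fun i => g (k + 1 - i) * (invAux d q g v i).map (fun x => x ^ q ^ (k + 1 - i)))]

lemma twistedMul_invAux {d : ℕ} (g : ℕ → Matrix (Fin d) (Fin d) R)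
    (v : Matrix (Fin d) (Fin d) R) (hv : g 0 * v = 1) :
    twistedMul d (p ^ h) g (invAux d (p ^ h) g v) = twistedOne d := by
  funext k
  cases k with
  | zero =>
    simp only [twistedMul, twistedOne, if_pos rfl, zero_add, Finset.sum_range_one,
      Nat.sub_zero, invAux_zero, powq_map_id]
    exact hv
  | succ k =>
    simp only [twistedMul, twistedOne, Nat.succ_ne_zero, if_false]
    rw [Finset.sum_range_succ']
    have h0 : g 0 * (invAux d (p ^ h) g v (k + 1 - 0)).map (fun x => x ^ (p ^ h) ^ 0)
        = -(∑ i ∈ range (k + 1),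
            g (k + 1 - i) * (invAux d (p ^ h) g v i).map (fun x => x ^ (p ^ h) ^ (k + 1 - i))) := by
      rw [powq_map_id, Nat.sub_zero, invAux_succ, mul_neg, ← mul_assoc, hv, one_mul]
    rw [h0]
    have h1 : ∑ i ∈ range (k + 1),
        g (i + 1) * (invAux d (p ^ h) g v (k + 1 - (i + 1))).map
          (fun x => x ^ (p ^ h) ^ (i + 1))
        = ∑ i ∈ range (k + 1),
            g (k + 1 - i) * (invAux d (p ^ h) g v i).map
              (fun x => x ^ (p ^ h) ^ (k + 1 - i)) := by
      rw [← Finset.sum_range_reflect]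
      refine Finset.sum_congr rfl fun i hi => ?_
      simp only [mem_range] at hi
      have e1 : k + 1 - 1 - i = k - i := by omega
      have e2 : k - i + 1 = k + 1 - i := by omega
      have e3 : k + 1 - (k - i + 1) = i := by omega
      rw [e1, e3, e2]
    rw [h1, add_neg_cancel]

lemma invAux_mem {d : ℕ} (π : R) (g : ℕ → Matrix (Fin d) (Fin d) R)
    (v : Matrix (Fin d) (Fin d) R)
    (hg : ∀ i, ∀ a b, g i a b ∈ (Ideal.span {π} : Ideal R) ^ i) :
    ∀ k, ∀ a b, invAux d (p ^ h) g v k a b ∈ (Ideal.span {π} : Ideal R) ^ k := by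
  intro k
  induction k using Nat.strong_induction_on with
  | _ k ih =>
    match k with
    | 0 => intro a b; simp
    | (k + 1) =>
      intro a b
      rw [invAux_succ]
      simp only [Matrix.neg_apply, Matrix.mul_apply]
      refine neg_mem (Ideal.sum_mem _ fun c _ => Ideal.mul_mem_left _ _ ?_)
      rw [Matrix.sum_apply]
      refine Ideal.sum_mem _ fun i hi => ?_
      simp only [mem_range] at hi
      rw [Matrix.mul_apply]
      refine Ideal.sum_mem _ fun e _ => ?_
      have h1 : g (k + 1 - i) c e ∈ (Ideal.span {π} : Ideal R) ^ (k + 1 - i) := hg _ _ _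
      have h2 : (invAux d (p ^ h) g v i).map (fun x => x ^ (p ^ h) ^ (k + 1 - i)) e b
          ∈ (Ideal.span {π} : Ideal R) ^ i := by
        simp only [Matrix.map_apply]
        have hmem : invAux d (p ^ h) g v i e b ∈ (Ideal.span {π} : Ideal R) ^ i :=
          ih i (by omega) e b
        have hpow : (invAux d (p ^ h) g v i e b) ^ (p ^ h) ^ (k + 1 - i)
            ∈ ((Ideal.span {π} : Ideal R) ^ i) ^ ((p ^ h) ^ (k + 1 - i)) :=
          Ideal.pow_mem_pow hmem _
        rw [← pow_mul] at hpow
        refine Ideal.pow_le_pow_right ?_ hpow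
        have hq1 : 1 ≤ (p ^ h) ^ (k + 1 - i) :=
          Nat.one_le_pow _ _ (Nat.pow_pos (Fact.out (p := p.Prime)).pos)
        exact Nat.le_mul_of_pos_right _ (by omega)
      have := Ideal.mul_mem_mul h1 h2
      rw [← pow_add] at this
      have hle : (Ideal.span {π} : Ideal R) ^ (k + 1 - i + i) ≤
          (Ideal.span {π} : Ideal R) ^ (k + 1) := by
        have : k + 1 - i + i = k + 1 := by omega
        rw [this]
      exact hle this

end Aux

/-- Over a `π`-adically complete discrete valuation ring `R`
(of residue characteristic `p`, with `q` a power of `p`), the set `S*` of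
twisted power series `∑ Bᵢ τ^i` with `v(Bᵢ) ≥ i` and `B₀` invertible is a
group under composition: the twisted multiplication is associative and unital
on it, `S*` contains the identity, is closed under composition, and every
element of `S*` has a two-sided inverse in `S*`. -/
theorem Sstar_group
    {R : Type*} [CommRing R] [IsDomain R] [IsDiscreteValuationRing R]
    (p : ℕ) [Fact p.Prime] [CharP R p]
    (h : ℕ) (hh : 0 < h) (q : ℕ) (hq : q = p ^ h)
    (π : R) (hπ : Irreducible π)
    (hcomplete : IsAdicComplete (Ideal.span {π}) R) (d : ℕ) :
    (∀ g₁ g₂ g₃ : ℕ → Matrix (Fin d) (Fin d) R,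
        twistedMul d q (twistedMul d q g₁ g₂) g₃
          = twistedMul d q g₁ (twistedMul d q g₂ g₃)) ∧
    (∀ g : ℕ → Matrix (Fin d) (Fin d) R,
        twistedMul d q (twistedOne d) g = g ∧ twistedMul d q g (twistedOne d) = g) ∧
    (twistedOne d ∈ Sstar d π) ∧
    (∀ g₁ ∈ Sstar d π, ∀ g₂ ∈ Sstar d π, twistedMul d q g₁ g₂ ∈ Sstar d π) ∧
    (∀ g ∈ Sstar d π, ∃ g' ∈ Sstar d π,
        twistedMul d q g g' = twistedOne d ∧ twistedMul d q g' g = twistedOne d) := by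
  subst hq
  have hq1 : ∀ i : ℕ, 1 ≤ (p ^ h) ^ i := fun i =>
    Nat.one_le_pow _ _ (Nat.pow_pos (Fact.out (p := p.Prime)).pos)
  -- closure under multiplication
  have hclosed : ∀ g₁ ∈ Sstar d π, ∀ g₂ ∈ Sstar d π,
      twistedMul d (p ^ h) g₁ g₂ ∈ Sstar d π := by
    rintro g₁ ⟨hv₁, hu₁⟩ g₂ ⟨hv₂, hu₂⟩
    constructor
    · intro k a b
      simp only [twistedMul]
      rw [Matrix.sum_apply]
      refine Ideal.sum_mem _ fun i hi => ?_
      simp only [mem_range] at hi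
      rw [Matrix.mul_apply]
      refine Ideal.sum_mem _ fun e _ => ?_
      have h1 : g₁ i a e ∈ (Ideal.span {π} : Ideal R) ^ i := hv₁ _ _ _
      have h2 : (g₂ (k - i)).map (fun x => x ^ (p ^ h) ^ i) e b
          ∈ (Ideal.span {π} : Ideal R) ^ (k - i) := by
        simp only [Matrix.map_apply]
        have hpow : (g₂ (k - i) e b) ^ (p ^ h) ^ i
            ∈ ((Ideal.span {π} : Ideal R) ^ (k - i)) ^ ((p ^ h) ^ i) :=
          Ideal.pow_mem_pow (hv₂ _ _ _) _
        rw [← pow_mul] at hpow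
        exact Ideal.pow_le_pow_right
          (Nat.le_mul_of_pos_right _ (by have := hq1 i; omega)) hpow
      have := Ideal.mul_mem_mul h1 h2
      rw [← pow_add] at this
      exact Ideal.pow_le_pow_right (by omega) this
    · have : twistedMul d (p ^ h) g₁ g₂ 0 = g₁ 0 * g₂ 0 := by
        simp [twistedMul]
      rw [this]
      exact hu₁.mul hu₂
  -- right inverse
  have hrinv : ∀ g ∈ Sstar d π, ∃ g' ∈ Sstar d π,
      twistedMul d (p ^ h) g g' = twistedOne d := by
    rintro g ⟨hv, hu⟩
    refine ⟨invAux d (p ^ h) g ↑hu.unit⁻¹, ⟨invAux_mem p h π g _ hv, ?_⟩,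
      twistedMul_invAux p h g _ hu.mul_val_inv⟩
    show IsUnit (invAux d (p ^ h) g (↑hu.unit⁻¹) 0)
    rw [invAux_zero]
    exact hu.unit⁻¹.isUnit
  refine ⟨twistedMul_assoc p h,
    fun g => ⟨twistedMul_one_left p h g, twistedMul_one_right p h g⟩, ?_, hclosed, ?_⟩
  · constructor
    · intro i a b
      simp only [twistedOne]
      rcases Nat.eq_zero_or_pos i with hi | hi
      · subst hi; simp
      · simp [Nat.pos_iff_ne_zero.mp hi]
    · simp only [twistedOne, if_pos rfl]
      exact isUnit_one
  · -- two-sided inverse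
    intro g hg
    obtain ⟨g', hg', hgg'⟩ := hrinv g hg
    obtain ⟨g'', hg'', hg'g''⟩ := hrinv g' hg'
    have key : g'' = g := by
      calc g'' = twistedMul d (p ^ h) (twistedOne d) g'' := (twistedMul_one_left p h g'').symm
        _ = twistedMul d (p ^ h) (twistedMul d (p ^ h) g g') g'' := by rw [hgg']
        _ = twistedMul d (p ^ h) g (twistedMul d (p ^ h) g' g'') := twistedMul_assoc p h g g' g''
        _ = g := by rw [hg'g'', twistedMul_one_right p h]
    exact ⟨g', hg', hgg', key ▸ hg'g''⟩
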